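/- arXiv:1512.03496 — 6 statements merged into one kernel-verified Lean document; each statement's English description precedes it below -/
import Mathlib

section
/- Let r satisfy the relativistic two-body equation and let h(t) = r(t) × r'(t). Then for every t one has h(t) = exp(4ε(1/‖r(0)‖ − 1/‖r(t)‖)) • h(0). In particular the direction of the angular momentum vector is constant in time. -/
noncomputable def cross3 (a b : EuclideanSpace ℝ (Fin 3)) : EuclideanSpace ℝ (Fin 3) :=
  WithLp.toLp 2 ![a 1 * b 2 - a 2 * b 1, a 2 * b 0 - a 0 * b 2, a 0 * b 1 - a 1 * b 0]

theorem angular_momentum_explicit (ε : ℝ) (r : ℝ → EuclideanSpace ℝ (Fin 3))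
    (hr : ContDiff ℝ 2 r) (hrne : ∀ t, r t ≠ 0)
    (heq : ∀ t, deriv (deriv r) t =
      (-(1 / ‖r t‖ ^ 3)) • r t +
        (ε / ‖r t‖ ^ 3) •
          ((4 / ‖r t‖ - ‖deriv r t‖ ^ 2) • r t +
            (4 * (inner ℝ (r t) (deriv r t) : ℝ)) • deriv r t))
    (h : ℝ → EuclideanSpace ℝ (Fin 3))
    (hh : ∀ t, h t = cross3 (r t) (deriv r t)) :
    ∀ t : ℝ, h t = Real.exp (4 * ε * (1 / ‖r 0‖ - 1 / ‖r t‖)) • h 0 := by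
  have hrn : ∀ t, ‖r t‖ ≠ 0 := fun t => norm_ne_zero_iff.mpr (hrne t)
  have hdr : ContDiff ℝ 1 (deriv r) := by
    have h2 : ContDiff ℝ (1 + 1) r := by norm_num; exact hr
    exact (contDiff_succ_iff_deriv.mp h2).2.2
  have hR : ∀ t, HasDerivAt r (deriv r t) t :=
    fun t => ((hr.differentiable (by norm_num)) t).hasDerivAt
  have hR2 : ∀ t, HasDerivAt (deriv r) (deriv (deriv r) t) t :=
    fun t => ((hdr.differentiable one_ne_zero) t).hasDerivAt
  have hproj : ∀ (f : ℝ → EuclideanSpace ℝ (Fin 3)) (f' : EuclideanSpace ℝ (Fin 3)) (t : ℝ),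
      HasDerivAt f f' t → ∀ i, HasDerivAt (fun s => f s i) (f' i) t := by
    intro f f' t hf i
    exact ((EuclideanSpace.proj i).hasFDerivAt.comp_hasDerivAt t hf)
  set P : ℝ → ℝ := fun t => (inner ℝ (r t) (deriv r t) : ℝ) with hP
  set φ : ℝ → ℝ := fun s => 4 * ε * (1 / ‖r 0‖ - 1 / ‖r s‖) with hφdef
  set φ' : ℝ → ℝ := fun t => 4 * ε * (P t / ‖r t‖ ^ 3) with hφ'def
  have hnorm : ∀ t, HasDerivAt (fun s => ‖r s‖) (P t / ‖r t‖) t := by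
    intro t
    have hsq : HasDerivAt (fun s => ‖r s‖ ^ 2) (2 * P t) t := (hR t).norm_sq
    have hs := hsq.sqrt (pow_ne_zero 2 (hrn t))
    have : (fun s => Real.sqrt (‖r s‖ ^ 2)) = fun s => ‖r s‖ := by
      funext s; rw [Real.sqrt_sq (norm_nonneg _)]
    rw [this] at hs
    convert hs using 1
    rw [Real.sqrt_sq (norm_nonneg _), mul_div_mul_left _ _ (two_ne_zero)]
  have hφ : ∀ t, HasDerivAt φ (φ' t) t := by
    intro t
    have hinv : HasDerivAt (fun s => (‖r s‖)⁻¹) (-(P t / ‖r t‖) / ‖r t‖ ^ 2) t :=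
      (hnorm t).inv (hrn t)
    have := ((hasDerivAt_const t (1 / ‖r 0‖)).sub
      (by simpa [one_div] using hinv)).const_mul (4 * ε)
    convert this using 1
    · rfl
    · rfl
    · funext s; simp [hφdef, one_div]
    field_simp [hφ'def]
    ring
  have main : ∀ (j k : Fin 3) (t : ℝ),
      HasDerivAt (fun s => r s j * deriv r s k - r s k * deriv r s j)
        (φ' t * (r t j * deriv r t k - r t k * deriv r t j)) t := by
    intro j k t
    have haj := hproj r _ t (hR t) j
    have hak := hproj r _ t (hR t) k
    have hbj := hproj (deriv r) _ t (hR2 t) j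
    have hbk := hproj (deriv r) _ t (hR2 t) k
    have hd := (haj.mul hbk).sub (hak.mul hbj)
    refine hd.congr_deriv ?_
    have e : ∀ i : Fin 3, deriv (deriv r) t i =
        (-(1 / ‖r t‖ ^ 3)) * r t i +
          (ε / ‖r t‖ ^ 3) * ((4 / ‖r t‖ - ‖deriv r t‖ ^ 2) * r t i + (4 * P t) * deriv r t i) := by
      intro i
      simpa only [PiLp.add_apply, PiLp.smul_apply, smul_eq_mul]
        using congrArg (fun v => v i) (heq t)
    rw [e j, e k, hφ'def]
    field_simp
    ring
  have hcomp : ∀ (i : Fin 3) (t : ℝ), HasDerivAt (fun s => h s i) (φ' t * h t i) t := by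
    intro i t
    fin_cases i
    · simpa only [hh, cross3, Fin.zero_eta, Fin.mk_one, Fin.reduceFinMk, Fin.isValue, Matrix.cons_val_zero] using main 1 2 t
    · simpa only [hh, cross3, Fin.zero_eta, Fin.mk_one, Fin.reduceFinMk, Fin.isValue, Matrix.cons_val_one, Matrix.cons_val_zero] using main 2 0 t
    · simpa only [hh, cross3, Fin.zero_eta, Fin.mk_one, Fin.reduceFinMk, Fin.isValue, Matrix.cons_val_two, Matrix.tail_cons, Matrix.head_cons]
        using main 0 1 t
  have hconst : ∀ (i : Fin 3) (t : ℝ), h t i = Real.exp (φ t) * h 0 i := by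
    intro i t
    set F : ℝ → ℝ := fun s => Real.exp (-φ s) * h s i with hF
    have hFd : ∀ s, HasDerivAt F 0 s := by
      intro s
      have he : HasDerivAt (fun u => Real.exp (-φ u)) (Real.exp (-φ s) * (-φ' s)) s :=
        ((hφ s).neg).exp
      have := he.mul (hcomp i s)
      refine this.congr_deriv ?_
      ring
    have hc : F t = F 0 :=
      is_const_of_deriv_eq_zero (fun s => (hFd s).differentiableAt)
        (fun s => (hFd s).deriv) t 0
    have h0 : φ 0 = 0 := by simp [hφdef]
    rw [hF] at hc
    simp only [h0, neg_zero, Real.exp_zero, one_mul] at hc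
    rw [← hc, ← mul_assoc, ← Real.exp_add]
    simp
  intro t
  ext i
  have := hconst i t
  simp only [PiLp.smul_apply, smul_eq_mul]
  exact this
end

section
/- Let r satisfy the relativistic two-body equation and let h(t) = r(t) × r'(t). Then the vector-valued function t ↦ exp(4ε/‖r(t)‖) • h(t) is constant in t; that is, exp(4ε/‖r(t)‖) • h(t) = exp(4ε/‖r(0)‖) • h(0) for all t. -/
private lemma key_const (ε : ℝ) (r : ℝ → EuclideanSpace ℝ (Fin 3))
    (hrd : Differentiable ℝ r) (hvd : Differentiable ℝ (deriv r))
    (hrne : ∀ t, r t ≠ 0)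
    (heq : ∀ t, deriv (deriv r) t =
      (-(1 / ‖r t‖ ^ 3)) • r t +
        (ε / ‖r t‖ ^ 3) •
          ((4 / ‖r t‖ - ‖deriv r t‖ ^ 2) • r t +
            (4 * (inner ℝ (r t) (deriv r t) : ℝ)) • deriv r t))
    (j k : Fin 3) (t : ℝ) :
    HasDerivAt (fun s => Real.exp (4 * ε / ‖r s‖) *
      (r s j * deriv r s k - r s k * deriv r s j)) 0 t := by
  have hu : ∀ (i : Fin 3), HasDerivAt (fun s => r s i) (deriv r t i) t := by
    intro i
    have := (EuclideanSpace.proj (𝕜 := ℝ) i).hasFDerivAt.comp_hasDerivAt t (hrd t).hasDerivAt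
    exact this
  have hv : ∀ (i : Fin 3), HasDerivAt (fun s => deriv r s i) (deriv (deriv r) t i) t := by
    intro i
    have := (EuclideanSpace.proj (𝕜 := ℝ) i).hasFDerivAt.comp_hasDerivAt t (hvd t).hasDerivAt
    exact this
  set n : ℝ := ‖r t‖ with hn_def
  have npos : 0 < n := norm_pos_iff.mpr (hrne t)
  have nne : n ≠ 0 := ne_of_gt npos
  set P : ℝ := (inner ℝ (r t) (deriv r t) : ℝ) with hP_def
  -- derivative of the norm
  have hnorm_eq : ∀ s, ‖r s‖ = Real.sqrt ((r s 0)^2 + (r s 1)^2 + (r s 2)^2) := by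
    intro s
    rw [EuclideanSpace.norm_eq]
    simp [Fin.sum_univ_three, sq_abs]
  have hq : HasDerivAt (fun s => (r s 0)^2 + (r s 1)^2 + (r s 2)^2) (2 * P) t := by
    have := (((hu 0).pow 2).add ((hu 1).pow 2)).add ((hu 2).pow 2)
    refine this.congr_deriv ?_
    symm
    simp [hP_def, PiLp.inner_apply, Fin.sum_univ_three]
    ring
  have hqt : (r t 0)^2 + (r t 1)^2 + (r t 2)^2 = n^2 := by
    rw [hn_def, hnorm_eq t, Real.sq_sqrt (by positivity)]
  have hqne : (r t 0)^2 + (r t 1)^2 + (r t 2)^2 ≠ 0 := by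
    rw [hqt]; positivity
  have hn : HasDerivAt (fun s => ‖r s‖) (P / n) t := by
    have := (Real.hasDerivAt_sqrt hqne).comp t hq
    have heqf : (fun s => ‖r s‖) = fun s => Real.sqrt ((r s 0)^2 + (r s 1)^2 + (r s 2)^2) :=
      funext hnorm_eq
    rw [heqf]
    refine this.congr_deriv ?_
    symm
    rw [hqt, Real.sqrt_sq npos.le]
    field_simp
  -- derivative of the exponential factor
  have hg : HasDerivAt (fun s => Real.exp (4 * ε / ‖r s‖))
      (Real.exp (4 * ε / n) * (4 * ε * (-(P / n) / n ^ 2))) t := by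
    have hinv : HasDerivAt (fun s => ‖r s‖⁻¹) (-(P / n) / n ^ 2) t := hn.inv nne
    have := (hinv.const_mul (4 * ε)).exp
    simp only [div_eq_mul_inv]
    convert this using 2
    ring
  -- second derivative components
  set A : ℝ := -(1 / n ^ 3) + ε / n ^ 3 * (4 / n - ‖deriv r t‖ ^ 2) with hA_def
  set c : ℝ := ε / n ^ 3 * (4 * P) with hc_def
  have hw : ∀ i : Fin 3, deriv (deriv r) t i = A * r t i + c * deriv r t i := by
    intro i
    have := congrFun (congrArg (fun (x : EuclideanSpace ℝ (Fin 3)) (i : Fin 3) => x i) (heq t)) i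
    simp only [PiLp.add_apply, PiLp.smul_apply, smul_eq_mul] at this
    rw [this, hA_def, hc_def, hP_def]
    ring
  have hhd : HasDerivAt (fun s => r s j * deriv r s k - r s k * deriv r s j)
      (c * (r t j * deriv r t k - r t k * deriv r t j)) t := by
    have := ((hu j).mul (hv k)).sub ((hu k).mul (hv j))
    refine this.congr_deriv ?_
    symm
    rw [hw j, hw k]
    ring
  have := hg.mul hhd
  refine this.congr_deriv ?_
  symm
  have hne : (4 * ε * (-(P / n) / n ^ 2)) = -c := by
    rw [hc_def]
    field_simp
  rw [hne]
  ring

theorem angular_momentum_invariant (ε : ℝ) (r : ℝ → EuclideanSpace ℝ (Fin 3))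
    (hr : ContDiff ℝ 2 r) (hrne : ∀ t, r t ≠ 0)
    (heq : ∀ t, deriv (deriv r) t =
      (-(1 / ‖r t‖ ^ 3)) • r t +
        (ε / ‖r t‖ ^ 3) •
          ((4 / ‖r t‖ - ‖deriv r t‖ ^ 2) • r t +
            (4 * (inner ℝ (r t) (deriv r t) : ℝ)) • deriv r t))
    (h : ℝ → EuclideanSpace ℝ (Fin 3))
    (hh : ∀ t, h t = cross3 (r t) (deriv r t)) :
    ∀ t : ℝ, Real.exp (4 * ε / ‖r t‖) • h t = Real.exp (4 * ε / ‖r 0‖) • h 0 := by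
  have hrd : Differentiable ℝ r := hr.differentiable (by norm_num)
  have hvd : Differentiable ℝ (deriv r) := by
    have h2 : ContDiff ℝ ((1 : WithTop ℕ∞) + 1) r := by norm_num [hr]
    exact ((contDiff_succ_iff_deriv.mp h2).2.2).differentiable one_ne_zero
  have hconst : ∀ (j k : Fin 3) (t : ℝ),
      Real.exp (4 * ε / ‖r t‖) * (r t j * deriv r t k - r t k * deriv r t j)
      = Real.exp (4 * ε / ‖r 0‖) * (r 0 j * deriv r 0 k - r 0 k * deriv r 0 j) := by
    intro j k t
    exact is_const_of_deriv_eq_zero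
      (fun s => (key_const ε r hrd hvd hrne heq j k s).differentiableAt)
      (fun s => (key_const ε r hrd hvd hrne heq j k s).deriv) t 0
  intro t
  have hcomp : ∀ i : Fin 3,
      Real.exp (4 * ε / ‖r t‖) * h t i = Real.exp (4 * ε / ‖r 0‖) * h 0 i := by
    intro i
    rw [hh t, hh 0]
    fin_cases i
    · simpa [cross3] using hconst 1 2 t
    · simpa [cross3] using hconst 2 0 t
    · simpa [cross3] using hconst 0 1 t
  refine PiLp.ext fun i => ?_
  simpa using hcomp i
end

section
/- (Planarity, Theorem 1.) Let r satisfy the relativistic two-body equation and let h(t) = r(t) × r'(t). If h(0) ≠ 0, then for every t one has ⟨r(t), h(0)⟩ = 0 and ⟨r'(t), h(0)⟩ = 0; that is, the motion takes place in the fixed plane through the origin orthogonal to h(0). -/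
theorem motion_is_planar (ε : ℝ) (r : ℝ → EuclideanSpace ℝ (Fin 3))
    (hr : ContDiff ℝ 2 r) (hrne : ∀ t, r t ≠ 0)
    (heq : ∀ t, deriv (deriv r) t =
      (-(1 / ‖r t‖ ^ 3)) • r t +
        (ε / ‖r t‖ ^ 3) •
          ((4 / ‖r t‖ - ‖deriv r t‖ ^ 2) • r t +
            (4 * (inner ℝ (r t) (deriv r t) : ℝ)) • deriv r t))
    (h : ℝ → EuclideanSpace ℝ (Fin 3))
    (hh : ∀ t, h t = cross3 (r t) (deriv r t)) (hh0 : h 0 ≠ 0) :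
    ∀ t : ℝ, (inner ℝ (r t) (h 0) : ℝ) = 0 ∧ (inner ℝ (deriv r t) (h 0) : ℝ) = 0 := by
  have hd1 : Differentiable ℝ r := hr.differentiable (by norm_num)
  have hr1 : ContDiff ℝ 1 (deriv r) := by
    have h2 : ContDiff ℝ (1 + 1) r := by exact_mod_cast hr
    exact (contDiff_succ_iff_deriv.mp h2).2.2
  have hd2 : Differentiable ℝ (deriv r) := hr1.differentiable one_ne_zero
  -- component derivatives
  have hri : ∀ (i : Fin 3) (t : ℝ), HasDerivAt (fun s => r s i) (deriv r t i) t := by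
    intro i t
    exact ((EuclideanSpace.proj i (𝕜 := ℝ)).hasFDerivAt.comp_hasDerivAt t
      (hd1 t).hasDerivAt)
  have hr'i : ∀ (i : Fin 3) (t : ℝ),
      HasDerivAt (fun s => deriv r s i) (deriv (deriv r) t i) t := by
    intro i t
    exact ((EuclideanSpace.proj i (𝕜 := ℝ)).hasFDerivAt.comp_hasDerivAt t
      (hd2 t).hasDerivAt)
  -- the scalar coefficient
  set c : ℝ → ℝ := fun t => (ε / ‖r t‖ ^ 3) * (4 * (inner ℝ (r t) (deriv r t) : ℝ)) with hcdef
  have hccont : Continuous c := by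
    have h1 : Continuous fun t => ‖r t‖ ^ 3 := (hd1.continuous.norm.pow 3)
    have hne : ∀ t, ‖r t‖ ^ 3 ≠ 0 := fun t =>
      pow_ne_zero _ (norm_ne_zero_iff.mpr (hrne t))
    exact (continuous_const.div h1 hne).mul
      (continuous_const.mul (hd1.continuous.inner hd2.continuous))
  set C : ℝ → ℝ := fun t => ∫ s in (0:ℝ)..t, c s with hCdef
  have hCd : ∀ t, HasDerivAt C (c t) t := fun t =>
    intervalIntegral.integral_hasDerivAt_right (hccont.intervalIntegrable _ _)
      hccont.aestronglyMeasurable.stronglyMeasurableAtFilter hccont.continuousAt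
  -- component form of the equation of motion
  have heqi : ∀ (t : ℝ) (i : Fin 3), deriv (deriv r) t i =
      (-(1 / ‖r t‖ ^ 3)) * r t i +
        (ε / ‖r t‖ ^ 3) * ((4 / ‖r t‖ - ‖deriv r t‖ ^ 2) * r t i +
          (4 * (inner ℝ (r t) (deriv r t) : ℝ)) * deriv r t i) := by
    intro t i
    have h2 := congrArg (fun v : EuclideanSpace ℝ (Fin 3) => v i) (heq t)
    simp only [PiLp.add_apply, PiLp.smul_apply, smul_eq_mul] at h2
    rw [h2]; try ring
  -- components of h
  have e0 : ∀ s, h s 0 = r s 1 * deriv r s 2 - r s 2 * deriv r s 1 := by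
    intro s; rw [hh]; simp [cross3]
  have e1 : ∀ s, h s 1 = r s 2 * deriv r s 0 - r s 0 * deriv r s 2 := by
    intro s; rw [hh]; simp [cross3]
  have e2 : ∀ s, h s 2 = r s 0 * deriv r s 1 - r s 1 * deriv r s 0 := by
    intro s; rw [hh]; simp [cross3]
  -- h components satisfy the linear ODE
  have key0 : ∀ t : ℝ, HasDerivAt (fun s => h s 0) (c t * h t 0) t := by
    intro t
    simp only [e0]
    have hd := ((hri 1 t).mul (hr'i 2 t)).sub ((hri 2 t).mul (hr'i 1 t))
    refine hd.congr_deriv ?_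
    rw [heqi t 1, heqi t 2, hcdef]; ring
  have key1 : ∀ t : ℝ, HasDerivAt (fun s => h s 1) (c t * h t 1) t := by
    intro t
    simp only [e1]
    have hd := ((hri 2 t).mul (hr'i 0 t)).sub ((hri 0 t).mul (hr'i 2 t))
    refine hd.congr_deriv ?_
    rw [heqi t 0, heqi t 2, hcdef]; ring
  have key2 : ∀ t : ℝ, HasDerivAt (fun s => h s 2) (c t * h t 2) t := by
    intro t
    simp only [e2]
    have hd := ((hri 0 t).mul (hr'i 1 t)).sub ((hri 1 t).mul (hr'i 0 t))
    refine hd.congr_deriv ?_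
    rw [heqi t 0, heqi t 1, hcdef]; ring
  have key : ∀ (i : Fin 3) (t : ℝ), HasDerivAt (fun s => h s i) (c t * h t i) t := by
    intro i t
    fin_cases i
    · exact key0 t
    · exact key1 t
    · exact key2 t
  -- integrating factor: exp(-C) * h_i is constant
  have hg : ∀ (i : Fin 3) (t : ℝ),
      HasDerivAt (fun s => Real.exp (-(C s)) * h s i) 0 t := by
    intro i t
    have hgd := (((hCd t).neg).exp).mul (key i t)
    refine hgd.congr_deriv ?_; ring
  have hconst : ∀ (i : Fin 3) (t : ℝ), h 0 i = Real.exp (-(C t)) * h t i := by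
    intro i t
    have := is_const_of_deriv_eq_zero (f := fun s => Real.exp (-(C s)) * h s i)
      (fun s => (hg i s).differentiableAt) (fun s => (hg i s).deriv) t 0
    simpa [hCdef, intervalIntegral.integral_same] using this.symm
  -- conclude
  intro t
  have hinner : ∀ x : EuclideanSpace ℝ (Fin 3),
      (inner ℝ x (h 0) : ℝ) = Real.exp (-(C t)) *
        (x 0 * h t 0 + x 1 * h t 1 + x 2 * h t 2) := by
    intro x
    rw [show (inner ℝ x (h 0) : ℝ) = x 0 * h 0 0 + x 1 * h 0 1 + x 2 * h 0 2 by
      simp [PiLp.inner_apply, RCLike.inner_apply, Fin.sum_univ_three, mul_comm]]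
    rw [hconst 0 t, hconst 1 t, hconst 2 t]; ring
  constructor
  · rw [hinner (r t), e0 t, e1 t, e2 t]; ring_nf
  · rw [hinner (deriv r t), e0 t, e1 t, e2 t]; ring_nf
end

section
/- (Nonconservation of angular momentum, Theorem 1.) Let r satisfy the relativistic two-body equation and let h(t) = r(t) × r'(t). Then ‖h(t)‖ = ‖h(0)‖ · exp(4ε(1/‖r(0)‖ − 1/‖r(t)‖)) for all t. Consequently, if ε ≠ 0, h(0) ≠ 0, and there is a time t₁ with ‖r(t₁)‖ ≠ ‖r(0)‖, then ‖h(t₁)‖ ≠ ‖h(0)‖, i.e. the magnitude of the angular momentum is not conserved. -/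
theorem angular_momentum_not_conserved (ε : ℝ) (r : ℝ → EuclideanSpace ℝ (Fin 3))
    (hr : ContDiff ℝ 2 r) (hrne : ∀ t, r t ≠ 0)
    (heq : ∀ t, deriv (deriv r) t =
      (-(1 / ‖r t‖ ^ 3)) • r t +
        (ε / ‖r t‖ ^ 3) •
          ((4 / ‖r t‖ - ‖deriv r t‖ ^ 2) • r t +
            (4 * (inner ℝ (r t) (deriv r t) : ℝ)) • deriv r t))
    (h : ℝ → EuclideanSpace ℝ (Fin 3))
    (hh : ∀ t, h t = cross3 (r t) (deriv r t)) :
    (∀ t : ℝ, ‖h t‖ = ‖h 0‖ * Real.exp (4 * ε * (1 / ‖r 0‖ - 1 / ‖r t‖))) ∧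
      (ε ≠ 0 → h 0 ≠ 0 → ∀ t₁ : ℝ, ‖r t₁‖ ≠ ‖r 0‖ → ‖h t₁‖ ≠ ‖h 0‖) := by
  -- basic differentiability facts
  have h11 : ContDiff ℝ (1+1) r := by norm_num at hr ⊢; exact hr
  have hdr : ∀ t, HasDerivAt r (deriv r t) t := fun t =>
    ((hr.differentiable (by norm_num)) t).hasDerivAt
  have hdvC : ContDiff ℝ 1 (deriv r) := (contDiff_succ_iff_deriv.mp h11).2.2
  have hdv : ∀ t, HasDerivAt (deriv r) (deriv (deriv r) t) t := fun t =>
    ((hdvC.differentiable one_ne_zero) t).hasDerivAt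
  have hX : ∀ (t : ℝ) (i : Fin 3), HasDerivAt (fun s => r s i) (deriv r t i) t := by
    intro t i
    exact
      (EuclideanSpace.proj (𝕜 := ℝ) i).hasFDerivAt.comp_hasDerivAt t (hdr t)
  have hV : ∀ (t : ℝ) (i : Fin 3),
      HasDerivAt (fun s => deriv r s i) (deriv (deriv r) t i) t := by
    intro t i
    exact
      (EuclideanSpace.proj (𝕜 := ℝ) i).hasFDerivAt.comp_hasDerivAt t (hdv t)
  have ρpos : ∀ t, (0:ℝ) < ‖r t‖ := fun t => norm_pos_iff.mpr (hrne t)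
  -- componentwise acceleration
  have acomp : ∀ (t : ℝ) (i : Fin 3), deriv (deriv r) t i =
      -(1 / ‖r t‖ ^ 3) * r t i +
        (ε / ‖r t‖ ^ 3) * ((4 / ‖r t‖ - ‖deriv r t‖ ^ 2) * r t i +
          (4 * (inner ℝ (r t) (deriv r t) : ℝ)) * deriv r t i) := by
    intro t i
    have := congrArg (fun v : EuclideanSpace ℝ (Fin 3) => v i) (heq t)
    simpa [PiLp.add_apply, PiLp.smul_apply, smul_eq_mul, mul_add] using this
  -- scalar helpers
  set D : ℝ → ℝ := fun t => (inner ℝ (r t) (deriv r t) : ℝ) with hD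
  set k : ℝ → ℝ := fun t => 4 * ε * D t / ‖r t‖ ^ 3 with hk
  -- components of h
  have hc0 : ∀ t, h t 0 = r t 1 * deriv r t 2 - r t 2 * deriv r t 1 := fun t => by
    rw [hh t]; rfl
  have hc1 : ∀ t, h t 1 = r t 2 * deriv r t 0 - r t 0 * deriv r t 2 := fun t => by
    rw [hh t]; rfl
  have hc2 : ∀ t, h t 2 = r t 0 * deriv r t 1 - r t 1 * deriv r t 0 := fun t => by
    rw [hh t]; rfl
  -- derivative of components of h
  have hder : ∀ (t : ℝ) (i : Fin 3), HasDerivAt (fun s => h s i) (k t * h t i) t := by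
    intro t i
    have hρ : (‖r t‖ : ℝ) ≠ 0 := ne_of_gt (ρpos t)
    fin_cases i
    · show HasDerivAt (fun s => h s 0) (k t * h t 0) t
      have e : (fun s => h s 0) = fun s => r s 1 * deriv r s 2 - r s 2 * deriv r s 1 :=
        funext fun s => hc0 s
      rw [e]
      have H := ((hX t 1).mul (hV t 2)).sub ((hX t 2).mul (hV t 1))
      refine H.congr_deriv (Eq.symm ?_)
      rw [acomp t 1, acomp t 2, hk, hD, hc0 t]
      field_simp
      ring
    · show HasDerivAt (fun s => h s 1) (k t * h t 1) t
      have e : (fun s => h s 1) = fun s => r s 2 * deriv r s 0 - r s 0 * deriv r s 2 :=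
        funext fun s => hc1 s
      rw [e]
      have H := ((hX t 2).mul (hV t 0)).sub ((hX t 0).mul (hV t 2))
      refine H.congr_deriv (Eq.symm ?_)
      rw [acomp t 0, acomp t 2, hk, hD, hc1 t]
      field_simp
      ring
    · show HasDerivAt (fun s => h s 2) (k t * h t 2) t
      have e : (fun s => h s 2) = fun s => r s 0 * deriv r s 1 - r s 1 * deriv r s 0 :=
        funext fun s => hc2 s
      rw [e]
      have H := ((hX t 0).mul (hV t 1)).sub ((hX t 1).mul (hV t 0))
      refine H.congr_deriv (Eq.symm ?_)
      rw [acomp t 0, acomp t 1, hk, hD, hc2 t]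
      field_simp
      ring
  -- norm squared as sum of component squares
  have normsq : ∀ x : EuclideanSpace ℝ (Fin 3), ‖x‖ ^ 2 = x 0 ^ 2 + x 1 ^ 2 + x 2 ^ 2 := by
    intro x
    rw [EuclideanSpace.norm_eq, Real.sq_sqrt (by positivity)]
    simp [Fin.sum_univ_three, sq_abs]
  have innerf : ∀ t, D t = r t 0 * deriv r t 0 + r t 1 * deriv r t 1 + r t 2 * deriv r t 2 := by
    intro t
    simp [hD, PiLp.inner_apply, Fin.sum_univ_three, RCLike.inner_apply]; ring
  -- derivative of ‖h‖²
  have hH : ∀ t, HasDerivAt (fun s => ‖h s‖ ^ 2) (2 * k t * ‖h t‖ ^ 2) t := by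
    intro t
    have e : (fun s => ‖h s‖ ^ 2) = fun s => (h s 0) ^ 2 + (h s 1) ^ 2 + (h s 2) ^ 2 :=
      funext fun s => normsq (h s)
    rw [e]
    have H := (((hder t 0).pow 2).add ((hder t 1).pow 2)).add ((hder t 2).pow 2)
    refine H.congr_deriv (Eq.symm ?_)
    rw [normsq (h t)]
    push_cast
    ring
  -- derivative of ‖r‖²
  have hphi2 : ∀ t, HasDerivAt (fun s => ‖r s‖ ^ 2) (2 * D t) t := by
    intro t
    have e : (fun s => ‖r s‖ ^ 2) = fun s => (r s 0) ^ 2 + (r s 1) ^ 2 + (r s 2) ^ 2 :=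
      funext fun s => normsq (r s)
    rw [e]
    have H := (((hX t 0).pow 2).add ((hX t 1).pow 2)).add ((hX t 2).pow 2)
    refine H.congr_deriv (Eq.symm ?_)
    rw [innerf t]
    push_cast
    ring
  -- derivative of ‖r‖
  have hrho : ∀ t, HasDerivAt (fun s => ‖r s‖) (D t / ‖r t‖) t := by
    intro t
    have hne2 : ‖r t‖ ^ 2 ≠ 0 := pow_ne_zero 2 (ne_of_gt (ρpos t))
    have H := (Real.hasDerivAt_sqrt hne2).comp t (hphi2 t)
    have e : (fun s => Real.sqrt (‖r s‖ ^ 2)) = fun s => ‖r s‖ :=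
      funext fun s => Real.sqrt_sq (norm_nonneg _)
    rw [Function.comp_def, e] at H
    have hρ : (‖r t‖ : ℝ) ≠ 0 := ne_of_gt (ρpos t)
    refine H.congr_deriv (Eq.symm ?_)
    rw [Real.sqrt_sq (norm_nonneg _)]
    field_simp
  -- derivative of 1/‖r‖
  have hinv : ∀ t, HasDerivAt (fun s => 1 / ‖r s‖) (-(D t) / ‖r t‖ ^ 3) t := by
    intro t
    have hρ : (‖r t‖ : ℝ) ≠ 0 := ne_of_gt (ρpos t)
    have H := (hrho t).inv hρ
    simp only [one_div]
    refine H.congr_deriv (Eq.symm ?_)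
    rw [neg_div, neg_div, div_div, ← pow_succ']
  set g : ℝ → ℝ := fun t => 4 * ε * (1 / ‖r 0‖ - 1 / ‖r t‖) with hg
  have hgd : ∀ t, HasDerivAt g (k t) t := by
    intro t
    have H := (((hasDerivAt_const t (1 / ‖r 0‖)).sub (hinv t)).const_mul (4 * ε))
    refine H.congr_deriv (Eq.symm ?_)
    rw [hk]
    ring
  -- the conserved quantity
  set F : ℝ → ℝ := fun s => ‖h s‖ ^ 2 * Real.exp (-2 * g s) with hF
  have hFd : ∀ t, HasDerivAt F 0 t := by
    intro t
    have he := ((hgd t).const_mul (-2)).exp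
    have H := (hH t).mul he
    refine H.congr_deriv (Eq.symm ?_)
    ring
  have Fconst : ∀ t, F t = F 0 := fun t =>
    is_const_of_deriv_eq_zero (fun s => (hFd s).differentiableAt)
      (fun s => (hFd s).deriv) t 0
  have g0 : g 0 = 0 := by simp [hg]
  have main : ∀ t, ‖h t‖ = ‖h 0‖ * Real.exp (g t) := by
    intro t
    have hc := Fconst t
    rw [hF] at hc
    simp only [g0, mul_zero, neg_zero, Real.exp_zero, mul_one] at hc
    have hsq : ‖h t‖ ^ 2 = (‖h 0‖ * Real.exp (g t)) ^ 2 := by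
      have hx : Real.exp (-2 * g t) * Real.exp (2 * g t) = 1 := by
        rw [← Real.exp_add]; norm_num
      have : ‖h t‖ ^ 2 = ‖h 0‖ ^ 2 * Real.exp (2 * g t) := by
        calc ‖h t‖ ^ 2 = ‖h t‖ ^ 2 * (Real.exp (-2 * g t) * Real.exp (2 * g t)) := by
              rw [hx]; ring
          _ = (‖h t‖ ^ 2 * Real.exp (-2 * g t)) * Real.exp (2 * g t) := by ring
          _ = ‖h 0‖ ^ 2 * Real.exp (2 * g t) := by rw [hc]
      rw [this, mul_pow, sq (Real.exp (g t)), ← Real.exp_add, two_mul]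
    calc ‖h t‖ = Real.sqrt (‖h t‖ ^ 2) := (Real.sqrt_sq (norm_nonneg _)).symm
      _ = Real.sqrt ((‖h 0‖ * Real.exp (g t)) ^ 2) := by rw [hsq]
      _ = ‖h 0‖ * Real.exp (g t) := Real.sqrt_sq (by positivity)
  refine ⟨fun t => main t, ?_⟩
  intro hε hh0 t₁ hne
  rw [main t₁]
  have hgne : g t₁ ≠ 0 := by
    rw [hg]
    intro hcon
    have h1 : 1 / ‖r 0‖ - 1 / ‖r t₁‖ = 0 := by
      rcases mul_eq_zero.mp hcon with h' | h'
      · exact absurd h' (by simpa using hε)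
      · exact h'
    have : ‖r t₁‖ = ‖r 0‖ := by
      have h0 : (‖r 0‖ : ℝ) ≠ 0 := ne_of_gt (ρpos 0)
      have h1' : (‖r t₁‖ : ℝ) ≠ 0 := ne_of_gt (ρpos t₁)
      field_simp at h1
      linarith
    exact hne this
  have hexp : Real.exp (g t₁) ≠ 1 := fun hc => hgne (by
    rwa [← Real.exp_zero, Real.exp_eq_exp] at hc)
  have hn0 : ‖h 0‖ ≠ 0 := norm_ne_zero_iff.mpr hh0
  intro hcon
  apply hexp
  have := hcon.trans (mul_one ‖h 0‖).symm
  exact mul_left_cancel₀ hn0 this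
end

section
/- (Planar polar form of angular momentum evolution.) Let ε be a real number and let r, θ : ℝ → ℝ be twice differentiable with r(t) > 0 for all t, satisfying the tangential equation of motion 2 r'(t) θ'(t) + r(t) θ''(t) = (4ε/r(t)) r'(t) θ'(t). Then (d/dt)(r(t)² θ'(t)) = 4ε r'(t) θ'(t) for all t, and the quantity r(t)² θ'(t) · exp(4ε/r(t)) is constant in t. -/
theorem polar_angular_momentum_evolution (ε : ℝ) (r θ : ℝ → ℝ)
    (hr : Differentiable ℝ r) (hr' : Differentiable ℝ (deriv r))
    (hθ : Differentiable ℝ θ) (hθ' : Differentiable ℝ (deriv θ))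
    (hrpos : ∀ t, 0 < r t)
    (heq : ∀ t, 2 * deriv r t * deriv θ t + r t * deriv (deriv θ) t =
      (4 * ε / r t) * deriv r t * deriv θ t) :
    (∀ t : ℝ, deriv (fun s => r s ^ 2 * deriv θ s) t = 4 * ε * deriv r t * deriv θ t) ∧
      (∀ t : ℝ, r t ^ 2 * deriv θ t * Real.exp (4 * ε / r t) =
        r 0 ^ 2 * deriv θ 0 * Real.exp (4 * ε / r 0)) := by
  have hne : ∀ t, r t ≠ 0 := fun t => (hrpos t).ne'
  have hA : ∀ t, HasDerivAt (fun s => r s ^ 2 * deriv θ s)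
      (4 * ε * deriv r t * deriv θ t) t := by
    intro t
    have h1 : HasDerivAt (fun s => r s ^ 2 * deriv θ s)
        ((2 * r t ^ 1 * deriv r t) * deriv θ t + r t ^ 2 * deriv (deriv θ) t) t :=
      (((hr t).hasDerivAt.pow 2).mul (hθ' t).hasDerivAt)
    convert h1 using 1
    have h := heq t
    rw [div_mul_eq_mul_div, div_mul_eq_mul_div, eq_div_iff (hne t)] at h
    linear_combination -h
  have part1 : ∀ t : ℝ, deriv (fun s => r s ^ 2 * deriv θ s) t
      = 4 * ε * deriv r t * deriv θ t := fun t => (hA t).deriv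
  refine ⟨part1, ?_⟩
  have hF : ∀ t, HasDerivAt (fun s => r s ^ 2 * deriv θ s * Real.exp (4 * ε / r s)) 0 t := by
    intro t
    have hdiv : HasDerivAt (fun s => 4 * ε / r s)
        ((0 * r t - 4 * ε * deriv r t) / r t ^ 2) t :=
      (hasDerivAt_const t (4 * ε)).div (hr t).hasDerivAt (hne t)
    have hexp := hdiv.exp
    have h : HasDerivAt (fun s => r s ^ 2 * deriv θ s * Real.exp (4 * ε / r s))
        (4 * ε * deriv r t * deriv θ t * Real.exp (4 * ε / r t) +
          r t ^ 2 * deriv θ t * (Real.exp (4 * ε / r t) * ((0 * r t - 4 * ε * deriv r t) / r t ^ 2)))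
        t := (hA t).mul hexp
    convert h using 1
    field_simp [hne t]
    ring
  intro t
  exact is_const_of_deriv_eq_zero (fun x => (hF x).differentiableAt)
    (fun x => (hF x).deriv) t 0
end

section
/- (Scalar angular momentum derivative along the relativistic flow.) Let r satisfy the relativistic two-body equation and let h(t) = r(t) × r'(t). Then the scalar function ρ(t) = ‖r(t)‖ is differentiable with ρ'(t) = ⟨r(t), r'(t)⟩/‖r(t)‖, and h'(t) = (4ε ρ'(t)/ρ(t)²) • h(t) for all t. -/
theorem scalar_angular_momentum_derivative (ε : ℝ) (r : ℝ → EuclideanSpace ℝ (Fin 3))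
    (hr : ContDiff ℝ 2 r) (hrne : ∀ t, r t ≠ 0)
    (heq : ∀ t, deriv (deriv r) t =
      (-(1 / ‖r t‖ ^ 3)) • r t +
        (ε / ‖r t‖ ^ 3) •
          ((4 / ‖r t‖ - ‖deriv r t‖ ^ 2) • r t +
            (4 * (inner ℝ (r t) (deriv r t) : ℝ)) • deriv r t))
    (h : ℝ → EuclideanSpace ℝ (Fin 3))
    (hh : ∀ t, h t = cross3 (r t) (deriv r t))
    (ρ : ℝ → ℝ) (hρ : ∀ t, ρ t = ‖r t‖) :
    (∀ t : ℝ, HasDerivAt ρ ((inner ℝ (r t) (deriv r t) : ℝ) / ‖r t‖) t) ∧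
      (∀ t : ℝ, deriv h t = (4 * ε * deriv ρ t / ρ t ^ 2) • h t) := by
  have h21 : (2 : WithTop ℕ∞) = 1 + 1 := by norm_num
  have hr2 := hr
  rw [h21, contDiff_succ_iff_deriv] at hr2
  have hd1 : ∀ t, HasDerivAt r (deriv r t) t := fun t =>
    (hr2.1 t).hasDerivAt
  have hd2 : ∀ t, HasDerivAt (deriv r) (deriv (deriv r) t) t := fun t =>
    ((hr2.2.2.differentiable one_ne_zero) t).hasDerivAt
  have hRne : ∀ t, ‖r t‖ ≠ 0 := fun t => norm_ne_zero_iff.mpr (hrne t)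
  -- Part 1
  have part1 : ∀ t : ℝ, HasDerivAt ρ ((inner ℝ (r t) (deriv r t) : ℝ) / ‖r t‖) t := by
    intro t
    have hin : HasDerivAt (fun s => (inner ℝ (r s) (r s) : ℝ))
        ((inner ℝ (r t) (deriv r t) : ℝ) + (inner ℝ (deriv r t) (r t) : ℝ)) t :=
      (hd1 t).inner ℝ (hd1 t)
    have hpos : (inner ℝ (r t) (r t) : ℝ) ≠ 0 := by
      rw [real_inner_self_eq_norm_sq]
      exact pow_ne_zero 2 (hRne t)
    have hsq := (Real.hasDerivAt_sqrt hpos).comp t hin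
    have hfun : ρ = fun s => Real.sqrt (inner ℝ (r s) (r s) : ℝ) := by
      funext s
      rw [hρ s, norm_eq_sqrt_real_inner]
    rw [hfun]
    refine hsq.congr_deriv ?_
    rw [← norm_eq_sqrt_real_inner, real_inner_comm (deriv r t) (r t)]
    field_simp
    ring
  refine ⟨part1, fun t => ?_⟩
  -- Part 2
  set x := r t with hx
  set v := deriv r t with hv
  set a := deriv (deriv r) t with ha
  set R := ‖r t‖ with hR
  set P : ℝ := inner ℝ (r t) (deriv r t) with hP
  have hρd : deriv ρ t = P / R := (part1 t).deriv
  have hρt : ρ t = R := hρ t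
  -- coefficient
  set c : ℝ := 4 * ε * deriv ρ t / ρ t ^ 2 with hc
  have hcc : c = 4 * ε * P / R ^ 3 := by
    rw [hc, hρd, hρt]
    field_simp
  -- component derivatives of r and deriv r
  have hxc : ∀ i : Fin 3, HasDerivAt (fun s => r s i) (v i) t := fun i =>
    ((EuclideanSpace.proj (𝕜 := ℝ) i).hasFDerivAt.comp_hasDerivAt t (hd1 t))
  have hvc : ∀ i : Fin 3, HasDerivAt (fun s => deriv r s i) (a i) t := fun i =>
    ((EuclideanSpace.proj (𝕜 := ℝ) i).hasFDerivAt.comp_hasDerivAt t (hd2 t))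
  -- acceleration components
  have haeq : ∀ i : Fin 3,
      a i = (-(1 / R ^ 3)) * x i + (ε / R ^ 3) * ((4 / R - ‖v‖ ^ 2) * x i + (4 * P) * v i) := by
    intro i
    have h2 := congrArg (fun w : EuclideanSpace ℝ (Fin 3) => w i) (heq t)
    simp only [PiLp.add_apply, PiLp.smul_apply, smul_eq_mul] at h2
    rw [ha, h2]
  -- component functions of h
  have hc0 : (fun s => h s 0) = fun s => r s 1 * deriv r s 2 - r s 2 * deriv r s 1 := by
    funext s; rw [hh s]; rfl
  have hc1 : (fun s => h s 1) = fun s => r s 2 * deriv r s 0 - r s 0 * deriv r s 2 := by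
    funext s; rw [hh s]; rfl
  have hc2 : (fun s => h s 2) = fun s => r s 0 * deriv r s 1 - r s 1 * deriv r s 0 := by
    funext s; rw [hh s]; rfl
  have hh0 : h t 0 = x 1 * v 2 - x 2 * v 1 := by rw [hh t]; rfl
  have hh1 : h t 1 = x 2 * v 0 - x 0 * v 2 := by rw [hh t]; rfl
  have hh2 : h t 2 = x 0 * v 1 - x 1 * v 0 := by rw [hh t]; rfl
  -- key scalar identity
  have key : ∀ u w u' w' : ℝ,
      u * (-(1 / R ^ 3) * w + ε / R ^ 3 * ((4 / R - ‖v‖ ^ 2) * w + 4 * P * u'))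
        - w * (-(1 / R ^ 3) * u + ε / R ^ 3 * ((4 / R - ‖v‖ ^ 2) * u + 4 * P * w'))
        = c * (u * u' - w * w') + (w' * u' - u' * w') := by
    intro u w u' w'
    rw [hcc]
    field_simp
    ring
  have hcomp : ∀ i : Fin 3, HasDerivAt (fun s => h s i) (c * h t i) t := by
    intro i
    fin_cases i
    · show HasDerivAt (fun s => h s 0) (c * h t 0) t
      rw [hc0]
      have := ((hxc 1).mul (hvc 2)).sub ((hxc 2).mul (hvc 1))
      refine this.congr_deriv ?_
      rw [hh0, haeq 1, haeq 2]
      have := key (x 1) (x 2) (v 2) (v 1)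
      ring_nf at this ⊢
      linarith
    · show HasDerivAt (fun s => h s 1) (c * h t 1) t
      rw [hc1]
      have := ((hxc 2).mul (hvc 0)).sub ((hxc 0).mul (hvc 2))
      refine this.congr_deriv ?_
      rw [hh1, haeq 2, haeq 0]
      have := key (x 2) (x 0) (v 0) (v 2)
      ring_nf at this ⊢
      linarith
    · show HasDerivAt (fun s => h s 2) (c * h t 2) t
      rw [hc2]
      have := ((hxc 0).mul (hvc 1)).sub ((hxc 1).mul (hvc 0))
      refine this.congr_deriv ?_
      rw [hh2, haeq 0, haeq 1]
      have := key (x 0) (x 1) (v 1) (v 0)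
      ring_nf at this ⊢
      linarith
  -- assemble
  have hH : HasDerivAt h (c • h t) t := by
    have e := PiLp.continuousLinearEquiv 2 ℝ (fun _ : Fin 3 => ℝ)
    have He : HasDerivAt (fun s => (fun i => h s i : Fin 3 → ℝ)) (fun i => c * h t i) t :=
      hasDerivAt_pi.2 hcomp
    have He2 := ((PiLp.continuousLinearEquiv 2 ℝ (fun _ : Fin 3 => ℝ)).symm.toContinuousLinearMap.hasFDerivAt).comp_hasDerivAt t He
    exact He2
  rw [hH.deriv]
end
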